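/- (Entangled mediator achieving the direct-interaction speed, Eq. (12)) Let X, Y, Z denote the Pauli matrices on ℂ², let H_{C1} = −(I + X + Y + Z), H_{C2} = I − X − Y + Z, and define M = (1/(2√2))( Z ⊗ I ⊗ H_{C1} + I ⊗ Z ⊗ H_{C2} ) on ℂ² ⊗ ℂ² ⊗ ℂ². Let ψ(0) = (e₀⊗e₀⊗e₀ + e₁⊗e₁⊗e₁)/√2 and for t ∈ [0, π/4] let ρ_{AB}(t) = tr_C( exp(−itM) |ψ(0)⟩⟨ψ(0)| exp(itM) ). Then the negativity of ρ_{AB}(t) with respect to the bipartition A : B equals sin t · cos t; in particular at t = π/4 it equals 1/2, so the first two qubits are maximally entangled at the same time arccos(1/√2) = π/4 as in the optimal direct dynamics. -/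

import Mathlib

open scoped Matrix Kronecker ComplexOrder

noncomputable section

/-- Hermitian inner product on `n → ℂ` (conjugate-linear in the first argument). -/
def cinner {n : Type*} [Fintype n] (v w : n → ℂ) : ℂ :=
  ∑ i, (starRingEnd ℂ) (v i) * w i

/-- Tensor (Kronecker) product of vectors. -/
def tensorVec {α β : Type*} (v : α → ℂ) (w : β → ℂ) : α × β → ℂ :=
  fun p => v p.1 * w p.2

/-- The projector `|v⟩⟨v|`. -/
def vecProj {n : Type*} (v : n → ℂ) : Matrix n n ℂ :=
  Matrix.of fun i j => v i * (starRingEnd ℂ) (v j)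

/-- A density matrix: positive semidefinite with unit trace. -/
def IsDensityMatrix {n : Type*} [Fintype n] (ρ : Matrix n n ℂ) : Prop :=
  ρ.PosSemidef ∧ ρ.trace = 1

open Classical in
/-- Positive semidefinite square root (0 on non-PSD input). -/
def msqrt {n : Type*} [Fintype n] [DecidableEq n] (ρ : Matrix n n ℂ) : Matrix n n ℂ :=
  if h : ρ.PosSemidef then
    (h.1.eigenvectorUnitary : Matrix n n ℂ) * Matrix.diagonal ((↑) ∘ (√·) ∘ h.1.eigenvalues) *
      (star h.1.eigenvectorUnitary : Matrix n n ℂ)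
  else 0

/-- Uhlmann root fidelity `F(ρ,σ) = tr √(√ρ σ √ρ)`. -/
def rootFidelity {n : Type*} [Fintype n] [DecidableEq n] (ρ σ : Matrix n n ℂ) : ℝ :=
  ((msqrt (msqrt ρ * σ * msqrt ρ)).trace).re

/-- Partial trace over the second tensor factor. -/
def ptraceC {α γ : Type*} [Fintype γ] (ρ : Matrix (α × γ) (α × γ) ℂ) : Matrix α α ℂ :=
  Matrix.of fun i j => ∑ k, ρ (i, k) (j, k)

/-- Partial trace over the first tensor factor. -/
def ptraceA {α β : Type*} [Fintype α] (ρ : Matrix (α × β) (α × β) ℂ) : Matrix β β ℂ :=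
  Matrix.of fun i j => ∑ k, ρ (k, i) (k, j)

/-- Partial transpose on the second tensor factor. -/
def ptB {α β : Type*} (ρ : Matrix (α × β) (α × β) ℂ) : Matrix (α × β) (α × β) ℂ :=
  Matrix.of fun p q => ρ (p.1, q.2) (q.1, p.2)

open Classical in
/-- Negativity: the sum of the absolute values of the negative eigenvalues of
the partial transpose (0 if the partial transpose is not Hermitian). -/
def negativity {α β : Type*} [Fintype α] [Fintype β] [DecidableEq α] [DecidableEq β]
    (ρ : Matrix (α × β) (α × β) ℂ) : ℝ :=
  if h : (ptB ρ).IsHermitian then ∑ i, max 0 (- h.eigenvalues i) else 0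

/-- A family of vectors is an orthonormal basis family (orthonormal, indexed by the
same finite type as the dimension, hence a basis). -/
def IsONB {n : Type*} [Fintype n] [DecidableEq n] (x : n → n → ℂ) : Prop :=
  ∀ j k, cinner (x j) (x k) = if j = k then 1 else 0

/-- Separability: a finite convex combination of projectors onto product unit vectors. -/
def IsSeparableDM {α β : Type*} [Fintype α] [Fintype β]
    (ρ : Matrix (α × β) (α × β) ℂ) : Prop :=
  ∃ (m : ℕ) (p : Fin m → ℝ) (a : Fin m → α → ℂ) (b : Fin m → β → ℂ),
    (∀ j, 0 ≤ p j) ∧ (∑ j, p j = 1) ∧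
    (∀ j, cinner (a j) (a j) = 1) ∧ (∀ j, cinner (b j) (b j) = 1) ∧
    ρ = ∑ j, (p j : ℂ) • vecProj (tensorVec (a j) (b j))

/-- A maximally entangled state on `ℂ^d ⊗ ℂ^d`. -/
def IsMaxEnt {d : ℕ} (Ψ : Fin d × Fin d → ℂ) : Prop :=
  ∃ x y : Fin d → Fin d → ℂ, IsONB x ∧ IsONB y ∧
    Ψ = ((Real.sqrt d : ℂ)⁻¹) • ∑ j, tensorVec (x j) (y j)

/-- Standard basis vector `e₀` of `ℂ²`. -/
def qe0 : Fin 2 → ℂ := ![1, 0]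

/-- Standard basis vector `e₁` of `ℂ²`. -/
def qe1 : Fin 2 → ℂ := ![0, 1]

/-- Pauli `X` matrix. -/
def pX : Matrix (Fin 2) (Fin 2) ℂ := !![0, 1; 1, 0]

/-- Pauli `Y` matrix. -/
def pY : Matrix (Fin 2) (Fin 2) ℂ := !![0, -Complex.I; Complex.I, 0]

/-- Pauli `Z` matrix. -/
def pZ : Matrix (Fin 2) (Fin 2) ℂ := !![1, 0; 0, -1]

/-- `H_{C1} = -(I + X + Y + Z)`. -/
def HC1 : Matrix (Fin 2) (Fin 2) ℂ := -((1 : Matrix (Fin 2) (Fin 2) ℂ) + pX + pY + pZ)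

/-- `H_{C2} = I - X - Y + Z`. -/
def HC2 : Matrix (Fin 2) (Fin 2) ℂ := (1 : Matrix (Fin 2) (Fin 2) ℂ) - pX - pY + pZ

/-- The Hamiltonian `M = (Z ⊗ I ⊗ H_{C1} + I ⊗ Z ⊗ H_{C2})/(2√2)`. -/
def Ment : Matrix ((Fin 2 × Fin 2) × Fin 2) ((Fin 2 × Fin 2) × Fin 2) ℂ :=
  (((2 * Real.sqrt 2 : ℝ) : ℂ))⁻¹ •
    ((pZ ⊗ₖ (1 : Matrix (Fin 2) (Fin 2) ℂ)) ⊗ₖ HC1 +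
      ((1 : Matrix (Fin 2) (Fin 2) ℂ) ⊗ₖ pZ) ⊗ₖ HC2)

/-- The GHZ-type initial state `(|000⟩ + |111⟩)/√2`. -/
def ψGHZ : (Fin 2 × Fin 2) × Fin 2 → ℂ :=
  (((Real.sqrt 2 : ℝ) : ℂ))⁻¹ •
    (tensorVec (tensorVec qe0 qe0) qe0 + tensorVec (tensorVec qe1 qe1) qe1)

/-- The reduced state of `AB` at time `t`. -/
def ρABent (t : ℝ) : Matrix (Fin 2 × Fin 2) (Fin 2 × Fin 2) ℂ :=
  ptraceC (NormedSpace.exp ((-(Complex.I * (t : ℂ))) • Ment) * vecProj ψGHZ *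
    NormedSpace.exp ((Complex.I * (t : ℂ)) • Ment))


/-! ### Auxiliary constants -/

set_option maxHeartbeats 2000000

/-- `(√2)⁻¹` as a real number. -/
def rq : ℝ := (Real.sqrt 2)⁻¹

lemma s2 : (Real.sqrt 2) * (Real.sqrt 2) = 2 := Real.mul_self_sqrt (by norm_num)
lemma sqrt2_pos : 0 < Real.sqrt 2 := Real.sqrt_pos.mpr (by norm_num)
lemma hr2 : rq * rq = 1/2 := by rw [rq, ← mul_inv, s2]; norm_num
lemma hsr : Real.sqrt 2 * rq = 1 := mul_inv_cancel₀ (ne_of_gt sqrt2_pos)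
lemma hne2 : ((2 * Real.sqrt 2 : ℝ) : ℂ) ≠ 0 := by
  simp only [ne_eq, Complex.ofReal_eq_zero]
  positivity
lemma hc2 : (((Real.sqrt 2 : ℝ) : ℂ))⁻¹ ^ 2 = 1/2 := by
  rw [inv_pow, sq, ← Complex.ofReal_mul, s2]
  norm_num
lemma hc2' : (((Real.sqrt 2 : ℝ) : ℂ))⁻¹ * (((Real.sqrt 2 : ℝ) : ℂ))⁻¹ = 1/2 := by
  rw [← sq, hc2]
lemma hq2 : rq ^ 2 = 1/2 := by rw [sq]; exact hr2
lemma hperS (t : ℝ) : rq ^ 2 * Real.sin t = Real.sin t / 2 := by rw [hq2]; ring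
lemma hperC (t : ℝ) : rq ^ 2 * Real.cos t = Real.cos t / 2 := by rw [hq2]; ring
lemma hperSS (t : ℝ) : rq ^ 2 * Real.sin t ^ 2 = Real.sin t ^ 2 / 2 := by rw [hq2]; ring
lemma hperCC (t : ℝ) : rq ^ 2 * Real.cos t ^ 2 = Real.cos t ^ 2 / 2 := by rw [hq2]; ring
lemma hperSC (t : ℝ) : rq ^ 2 * (Real.sin t * Real.cos t) = Real.sin t * Real.cos t / 2 := by
  rw [hq2]; ring

/-- The eigenvector (unitary) matrix for `Ment`, block `B00` on the diagonal blocks `00`, `11`. -/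
def B00 : Matrix (Fin 2) (Fin 2) ℂ :=
  !![(1 - Complex.I)/2, (1 - Complex.I)/2; (rq : ℂ), -(rq : ℂ)]

def Pu : Matrix ((Fin 2 × Fin 2) × Fin 2) ((Fin 2 × Fin 2) × Fin 2) ℂ :=
  Matrix.of fun p q => if p.1 = q.1 then (if p.1.1 = p.1.2 then B00 else 1) p.2 q.2 else 0

/-- The eigenvalues of `Ment`. -/
def dE : (Fin 2 × Fin 2) × Fin 2 → ℝ :=
  fun k => ![![![(-1 : ℝ), 1], ![-(Real.sqrt 2), 0]], ![![Real.sqrt 2, 0], ![1, -1]]] k.1.1 k.1.2 k.2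

def Kb : Fin 2 → Fin 2 → Matrix (Fin 2) (Fin 2) ℂ := fun a b =>
  ![![!![0, -2+2*Complex.I; -2-2*Complex.I, 0], !![-4, 0; 0, 0]],
    ![!![4, 0; 0, 0], !![0, 2-2*Complex.I; 2+2*Complex.I, 0]]] a b

def N8 : Matrix ((Fin 2 × Fin 2) × Fin 2) ((Fin 2 × Fin 2) × Fin 2) ℂ :=
  Matrix.of fun p q => if p.1 = q.1 then Kb p.1.1 p.1.2 p.2 q.2 else 0

lemma hMent : Ment = (((2 * Real.sqrt 2 : ℝ) : ℂ))⁻¹ • N8 := by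
  rw [Ment]
  congr 1
  ext ⟨⟨a,b⟩,c⟩ ⟨⟨a',b'⟩,c'⟩
  fin_cases a <;> fin_cases b <;> fin_cases c <;> fin_cases a' <;> fin_cases b' <;> fin_cases c' <;>
    · simp only [N8, Kb, pX, pY, pZ, HC1, HC2, Matrix.kroneckerMap_apply, Matrix.add_apply,
        Matrix.neg_apply, Matrix.sub_apply, Matrix.of_apply, Matrix.one_apply,
        Matrix.cons_val_zero, Matrix.cons_val_one, Matrix.head_cons, Matrix.cons_val',
        Matrix.head_fin_const, Matrix.empty_val', Matrix.cons_val_fin_one]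
      norm_num [Prod.ext_iff, Fin.ext_iff] <;> ring

lemma hPP : Pu * Puᴴ = 1 := by
  ext ⟨⟨a,b⟩,c⟩ ⟨⟨a',b'⟩,c'⟩
  fin_cases a <;> fin_cases b <;> fin_cases c <;> fin_cases a' <;> fin_cases b' <;> fin_cases c' <;>
    · simp only [Pu, B00, Matrix.mul_apply, Fintype.sum_prod_type, Fin.sum_univ_two,
        Matrix.conjTranspose_apply, Matrix.of_apply, Matrix.one_apply, Matrix.cons_val_zero,
        Matrix.cons_val_one, Matrix.head_cons, Matrix.cons_val', Matrix.head_fin_const,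
        Matrix.empty_val', Matrix.cons_val_fin_one]
      norm_num [Prod.ext_iff, Fin.ext_iff, map_div₀, map_ofNat, Complex.conj_I,
        Complex.conj_ofReal, Complex.ext_iff] <;> nlinarith [hr2]

lemma hMP : Ment * Pu = Pu * Matrix.diagonal (fun k => (dE k : ℂ)) := by
  rw [hMent, smul_mul_assoc, inv_smul_eq_iff₀ hne2]
  ext ⟨⟨a,b⟩,c⟩ ⟨⟨a',b'⟩,c'⟩
  fin_cases a <;> fin_cases b <;> fin_cases c <;> fin_cases a' <;> fin_cases b' <;> fin_cases c' <;>
    · simp only [N8, Kb, Pu, B00, dE, Matrix.mul_apply, Fintype.sum_prod_type, Fin.sum_univ_two,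
        Matrix.diagonal_apply, Matrix.smul_apply, Matrix.of_apply, Matrix.one_apply,
        Matrix.cons_val_zero, Matrix.cons_val_one, Matrix.head_cons, Matrix.cons_val',
        Matrix.head_fin_const, Matrix.empty_val', Matrix.cons_val_fin_one, smul_eq_mul]
      norm_num [Prod.ext_iff, Fin.ext_iff, Complex.ext_iff] <;> nlinarith [hr2, hsr, s2]

/-! ### The matrix exponential of `z • Ment` -/

def Dm (z : ℂ) : Matrix ((Fin 2 × Fin 2) × Fin 2) ((Fin 2 × Fin 2) × Fin 2) ℂ :=
  Matrix.diagonal fun k => Complex.exp (z * (dE k : ℂ))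

lemma hexpM (z : ℂ) : NormedSpace.exp (z • Ment) = Pu * Dm z * Puᴴ := by
  have hQP : Puᴴ * Pu = 1 := mul_eq_one_comm.mp hPP
  have h0 : Ment = Pu * Matrix.diagonal (fun k => (dE k : ℂ)) * Puᴴ := by
    calc Ment = Ment * (Pu * Puᴴ) := by rw [hPP, mul_one]
      _ = (Ment * Pu) * Puᴴ := by rw [mul_assoc]
      _ = Pu * Matrix.diagonal (fun k => (dE k : ℂ)) * Puᴴ := by rw [hMP]
  have hMf : z • Ment = Pu * Matrix.diagonal (fun k => z * (dE k : ℂ)) * Puᴴ := by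
    rw [h0, ← smul_mul_assoc, ← mul_smul_comm, ← Matrix.diagonal_smul]
    congr 3
  rw [hMf]
  let U : (Matrix ((Fin 2 × Fin 2) × Fin 2) ((Fin 2 × Fin 2) × Fin 2) ℂ)ˣ :=
    ⟨Pu, Puᴴ, hPP, hQP⟩
  have hconj := Matrix.exp_units_conj U (Matrix.diagonal (fun k => z * (dE k : ℂ)))
  have hU : (U : Matrix _ _ ℂ) = Pu := rfl
  have hUinv : ((U⁻¹ : _ˣ) : Matrix _ _ ℂ) = Puᴴ := rfl
  rw [hU, hUinv] at hconj
  rw [hconj, Matrix.exp_diagonal]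
  congr 2
  rw [Pi.exp_def, ← Complex.exp_eq_exp_ℂ]
  rfl

/-- `A |v⟩⟨v| Aᴴ = |Av⟩⟨Av|`. -/
lemma mul_vecProj_mul {n : Type*} [Fintype n] (A : Matrix n n ℂ) (v : n → ℂ) :
    A * vecProj v * Aᴴ = vecProj (A *ᵥ v) := by
  ext i j
  simp only [vecProj, Matrix.mul_apply, Matrix.of_apply, Matrix.conjTranspose_apply,
    Matrix.mulVec, dotProduct, map_sum, map_mul, Finset.sum_mul, Finset.mul_sum,
    starRingEnd_apply]
  exact Finset.sum_congr rfl fun s _ => Finset.sum_congr rfl fun r _ => by ring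

/-! ### The evolved state -/

lemma expIt (t : ℝ) : Complex.exp (Complex.I * (t : ℂ)) =
    ((Real.cos t : ℝ) : ℂ) + ((Real.sin t : ℝ) : ℂ) * Complex.I := by
  rw [mul_comm, Complex.exp_mul_I, ← Complex.ofReal_cos, ← Complex.ofReal_sin]

lemma expIt' (t : ℝ) : Complex.exp (-(Complex.I * (t : ℂ))) =
    ((Real.cos t : ℝ) : ℂ) - ((Real.sin t : ℝ) : ℂ) * Complex.I := by
  rw [show -(Complex.I * (t : ℂ)) = ((-t : ℝ) : ℂ) * Complex.I by push_cast; ring,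
    Complex.exp_mul_I, ← Complex.ofReal_cos, ← Complex.ofReal_sin, Real.cos_neg, Real.sin_neg]
  push_cast
  ring

def χv : (Fin 2 × Fin 2) × Fin 2 → ℂ :=
  fun k => ![![![(1+Complex.I)/2*(rq:ℂ), (1+Complex.I)/2*(rq:ℂ)], ![0,0]],
             ![![0,0], ![(1/2:ℂ), -(1/2:ℂ)]]] k.1.1 k.1.2 k.2

def φv (t : ℝ) : (Fin 2 × Fin 2) × Fin 2 → ℂ :=
  fun k => ![![![((Real.cos t : ℝ):ℂ)*(rq:ℂ), (Complex.I-1)*((Real.sin t : ℝ):ℂ)/2], ![0,0]],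
             ![![0,0], ![-(1+Complex.I)*((Real.sin t : ℝ):ℂ)/2, ((Real.cos t : ℝ):ℂ)*(rq:ℂ)]]]
         k.1.1 k.1.2 k.2

lemma hχ : Puᴴ *ᵥ ψGHZ = χv := by
  funext ⟨⟨a,b⟩,c⟩
  fin_cases a <;> fin_cases b <;> fin_cases c <;>
    · simp only [χv, Pu, B00, ψGHZ, tensorVec, qe0, qe1, Matrix.mulVec, dotProduct,
        Fintype.sum_prod_type, Fin.sum_univ_two, Matrix.conjTranspose_apply, Matrix.of_apply,
        Matrix.one_apply, Pi.smul_apply, Pi.add_apply, smul_eq_mul, Matrix.cons_val_zero,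
        Matrix.cons_val_one, Matrix.head_cons, Matrix.cons_val', Matrix.head_fin_const,
        Matrix.empty_val', Matrix.cons_val_fin_one, rq, Complex.ofReal_inv]
      norm_num [Prod.ext_iff, Fin.ext_iff, map_div₀, map_ofNat, Complex.conj_I,
        Complex.conj_ofReal, map_inv₀]
      <;> (first
        | ring1
        | (rw [hc2])
        | (rw [hc2'])
        | (constructor <;> (first | trivial | nlinarith [hr2])))

lemma hφ (t : ℝ) : Pu *ᵥ (fun k => Complex.exp (-(Complex.I * (t : ℂ)) * (dE k : ℂ)) * χv k)
    = φv t := by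
  funext ⟨⟨a,b⟩,c⟩
  fin_cases a <;> fin_cases b <;> fin_cases c <;>
    · simp only [φv, χv, Pu, B00, dE, Matrix.mulVec, dotProduct,
        Fintype.sum_prod_type, Fin.sum_univ_two, Matrix.of_apply,
        Matrix.one_apply, Matrix.cons_val_zero,
        Matrix.cons_val_one, Matrix.head_cons, Matrix.cons_val', Matrix.head_fin_const,
        Matrix.empty_val', Matrix.cons_val_fin_one, Complex.ofReal_neg, Complex.ofReal_one,
        Complex.ofReal_zero, mul_neg, mul_one, mul_zero, neg_neg, expIt, expIt']
      norm_num [Prod.ext_iff, Fin.ext_iff, Complex.ext_iff, Complex.cos_ofReal_re,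
        Complex.sin_ofReal_re, Complex.cos_ofReal_im, Complex.sin_ofReal_im]
      <;> (first
        | trivial
        | ring1
        | linarith [hperS t, hperC t, hq2]
        | (constructor <;> (first | trivial | linarith [hperS t, hperC t, hq2])))

/-- The reduced density matrix, explicitly. -/
def Rm (t : ℝ) : Matrix (Fin 2 × Fin 2) (Fin 2 × Fin 2) ℂ :=
  Matrix.of fun p q =>
    ![![![![(1/2:ℂ), 0], ![0, ((Real.sin t * Real.cos t : ℝ):ℂ) * (Complex.I - 1) * (rq:ℂ)]],
        ![![0,0],![0,0]]],
      ![![![0,0],![0,0]],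
        ![![((Real.sin t * Real.cos t : ℝ):ℂ) * (-Complex.I - 1) * (rq:ℂ), 0], ![0, (1/2:ℂ)]]]]
      p.1 p.2 q.1 q.2

lemma hρAB (t : ℝ) : ρABent t = Rm t := by
  have hEψ : (Pu * Dm (-(Complex.I * (t:ℂ))) * Puᴴ) *ᵥ ψGHZ = φv t := by
    rw [← Matrix.mulVec_mulVec, ← Matrix.mulVec_mulVec, hχ]
    have hD : Dm (-(Complex.I * (t:ℂ))) *ᵥ χv
        = fun k => Complex.exp (-(Complex.I * (t : ℂ)) * (dE k : ℂ)) * χv k := by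
      funext k
      exact Matrix.mulVec_diagonal _ _ _
    rw [hD, hφ]
  have hadj : Pu * Dm (Complex.I * (t:ℂ)) * Puᴴ = (Pu * Dm (-(Complex.I * (t:ℂ))) * Puᴴ)ᴴ := by
    rw [Matrix.conjTranspose_mul, Matrix.conjTranspose_mul, Matrix.conjTranspose_conjTranspose,
      ← mul_assoc]
    congr 1
    congr 1
    have hstarf : (fun k => Complex.exp (Complex.I * (t:ℂ) * (dE k : ℂ)))
        = star (fun k => Complex.exp (-(Complex.I * (t:ℂ)) * (dE k : ℂ))) := by
      funext k
      rw [Pi.star_apply]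
      show Complex.exp _ = (starRingEnd ℂ) (Complex.exp _)
      rw [← Complex.exp_conj]
      congr 1
      simp only [map_mul, map_neg, Complex.conj_I, Complex.conj_ofReal]
      ring
    rw [Dm, Dm, Matrix.diagonal_conjTranspose, hstarf]
  rw [ρABent, hexpM, hexpM, hadj, mul_vecProj_mul, hEψ]
  ext ⟨a,b⟩ ⟨a',b'⟩
  fin_cases a <;> fin_cases b <;> fin_cases a' <;> fin_cases b' <;>
    · simp only [ptraceC, vecProj, Rm, φv, Fin.sum_univ_two, Matrix.of_apply,
        Matrix.cons_val_zero, Matrix.cons_val_one, Matrix.head_cons, Matrix.cons_val',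
        Matrix.head_fin_const, Matrix.empty_val', Matrix.cons_val_fin_one]
      norm_num [map_div₀, map_ofNat, Complex.conj_I, Complex.conj_ofReal, map_inv₀,
        Complex.ext_iff, Complex.cos_ofReal_re, Complex.sin_ofReal_re, Complex.cos_ofReal_im,
        Complex.sin_ofReal_im]
      <;> (first
        | trivial
        | ring1
        | linarith [hperS t, hperC t, hperSS t, hperCC t, hperSC t, hq2,
            Real.sin_sq_add_cos_sq t]
        | (constructor <;> (first
            | trivial
            | linarith [hperS t, hperC t, hperSS t, hperCC t, hperSC t, hq2,
                Real.sin_sq_add_cos_sq t])))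


/-! ### Eigenvalues via the characteristic polynomial -/

lemma hcq : ((rq : ℝ) : ℂ) * ((rq : ℝ) : ℂ) = 1/2 := by
  rw [← Complex.ofReal_mul, hr2]
  norm_num

lemma det_eig {n : Type*} [Fintype n] [DecidableEq n] {A : Matrix n n ℂ}
    (hA : A.IsHermitian) (x : ℝ) :
    ((x : ℂ) • (1 : Matrix n n ℂ) - A).det = ∏ i, ((x : ℂ) - (hA.eigenvalues i : ℂ)) := by
  have hsp := hA.spectral_theorem
  rw [Unitary.conjStarAlgAut_apply] at hsp
  set U : Matrix n n ℂ := (Matrix.IsHermitian.eigenvectorUnitary hA : Matrix n n ℂ) with hUdef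
  have hU1 : U * star U = 1 :=
    Matrix.mem_unitaryGroup_iff.mp (Matrix.IsHermitian.eigenvectorUnitary hA).2
  have hstep : (x : ℂ) • (1 : Matrix n n ℂ) - A
      = U * ((x : ℂ) • (1 : Matrix n n ℂ)
          - Matrix.diagonal (RCLike.ofReal ∘ hA.eigenvalues)) * star U := by
    rw [Matrix.mul_sub, Matrix.sub_mul, ← hsp, mul_smul_comm, mul_one, smul_mul_assoc, hU1]
  rw [hstep, Matrix.det_mul, Matrix.det_mul]
  have hdetU : U.det * (star U).det = 1 := by rw [← Matrix.det_mul, hU1, Matrix.det_one]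
  have hd : (x : ℂ) • (1 : Matrix n n ℂ) - Matrix.diagonal (RCLike.ofReal ∘ hA.eigenvalues)
      = Matrix.diagonal (fun i => (x:ℂ) - (hA.eigenvalues i : ℂ)) := by
    rw [Matrix.smul_one_eq_diagonal]
    ext i j
    by_cases h : i = j <;> simp [Matrix.diagonal_apply, h, Function.comp]
  calc U.det * ((x : ℂ) • (1 : Matrix n n ℂ)
          - Matrix.diagonal (RCLike.ofReal ∘ hA.eigenvalues)).det * (star U).det
      = ((x : ℂ) • (1 : Matrix n n ℂ)
          - Matrix.diagonal (RCLike.ofReal ∘ hA.eigenvalues)).det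
            * (U.det * (star U).det) := by ring
    _ = ((x : ℂ) • (1 : Matrix n n ℂ)
          - Matrix.diagonal (RCLike.ofReal ∘ hA.eigenvalues)).det := by rw [hdetU, mul_one]
    _ = ∏ i, ((x : ℂ) - (hA.eigenvalues i : ℂ)) := by rw [hd, Matrix.det_diagonal]

open Polynomial in
lemma eig_multiset {n : Type*} [Fintype n] [DecidableEq n] {A : Matrix n n ℂ}
    (hA : A.IsHermitian) (m : Multiset ℝ)
    (hdet : ∀ x : ℝ, ∏ i, (x - hA.eigenvalues i) = (m.map (fun a => x - a)).prod) :
    Multiset.map hA.eigenvalues Finset.univ.val = m := by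
  have hpoly : (∏ i, (X - C (hA.eigenvalues i)) : ℝ[X])
      = ((m.map fun a => X - C a)).prod := by
    apply Polynomial.funext
    intro x
    rw [Polynomial.eval_prod, Polynomial.eval_multiset_prod, Multiset.map_map]
    simpa using hdet x
  have h1 := Polynomial.roots_multiset_prod_X_sub_C
    (Multiset.map hA.eigenvalues Finset.univ.val)
  have h2 := Polynomial.roots_multiset_prod_X_sub_C m
  have e1 : ((Multiset.map hA.eigenvalues Finset.univ.val).map fun a => X - C a).prod
      = (∏ i, (X - C (hA.eigenvalues i)) : ℝ[X]) := by
    rw [Multiset.map_map]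
    rfl
  rw [← h2, ← hpoly, ← e1, h1]

/-- The reindexing equivalence `Fin 4 ≃ Fin 2 × Fin 2`. -/
def e4 : Fin 4 ≃ (Fin 2 × Fin 2) where
  toFun := ![(0,0), (0,1), (1,0), (1,1)]
  invFun := fun p => ![![0,1],![2,3]] p.1 p.2
  left_inv := by decide
  right_inv := by decide

lemma conjSinReal (t : ℝ) : (starRingEnd ℂ) (Complex.sin (t:ℂ)) = Complex.sin (t:ℂ) := by
  rw [← Complex.sin_conj, Complex.conj_ofReal]
lemma conjCosReal (t : ℝ) : (starRingEnd ℂ) (Complex.cos (t:ℂ)) = Complex.cos (t:ℂ) := by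
  rw [← Complex.cos_conj, Complex.conj_ofReal]

lemma herm (t : ℝ) : (ptB (Rm t)).IsHermitian := by
  show _ᴴ = _
  ext ⟨a,b⟩ ⟨a',b'⟩
  fin_cases a <;> fin_cases b <;> fin_cases a' <;> fin_cases b' <;>
    · simp only [ptB, Rm, Matrix.conjTranspose_apply, Matrix.of_apply, Matrix.cons_val_zero,
        Matrix.cons_val_one, Matrix.head_cons, Matrix.cons_val', Matrix.head_fin_const,
        Matrix.empty_val', Matrix.cons_val_fin_one]
      norm_num [map_ofNat, Complex.conj_I, Complex.conj_ofReal, conjSinReal, conjCosReal]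
      <;> (first | trivial | ring1)

lemma hdet4 (t : ℝ) (x : ℝ) :
    ((x : ℂ) • (1 : Matrix (Fin 2 × Fin 2) (Fin 2 × Fin 2) ℂ) - ptB (Rm t)).det
      = ((x : ℂ) - 1/2)^2 * ((x : ℂ) - ((Real.sin t * Real.cos t : ℝ) : ℂ))
        * ((x : ℂ) + ((Real.sin t * Real.cos t : ℝ) : ℂ)) := by
  rw [← Matrix.det_submatrix_equiv_self e4]
  simp only [Matrix.det_succ_row_zero, Fin.sum_univ_succ,
    Matrix.submatrix_apply, e4, Equiv.coe_fn_mk, Matrix.sub_apply, Matrix.smul_apply,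
    Matrix.one_apply, ptB, Rm, Matrix.of_apply, Matrix.cons_val_zero, Matrix.cons_val_one,
    Matrix.head_cons, Matrix.cons_val', Matrix.head_fin_const, Matrix.empty_val',
    Matrix.cons_val_fin_one, Matrix.cons_val_two, Matrix.cons_val_three, Matrix.tail_cons,
    smul_eq_mul, Prod.mk.injEq]
  simp [Fin.succAbove, Fin.lt_def, Prod.ext_iff, Fin.ext_iff]
  linear_combination
    (-(((x:ℂ) - 1/2)^2 * (Complex.sin (t:ℂ) * Complex.cos (t:ℂ))^2 * (1 - Complex.I^2))) * hcq
    + (((x:ℂ) - 1/2)^2 * (Complex.sin (t:ℂ) * Complex.cos (t:ℂ))^2 / 2) * Complex.I_sq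

lemma negativity_Rm (t : ℝ) (h0 : 0 ≤ Real.sin t * Real.cos t) :
    negativity (Rm t) = Real.sin t * Real.cos t := by
  have hA : (ptB (Rm t)).IsHermitian := herm t
  rw [negativity, dif_pos hA]
  have hms : Multiset.map hA.eigenvalues Finset.univ.val
      = ({1/2, 1/2, Real.sin t * Real.cos t, -(Real.sin t * Real.cos t)} : Multiset ℝ) := by
    apply eig_multiset
    intro x
    apply Complex.ofReal_injective
    calc ((∏ i, (x - hA.eigenvalues i) : ℝ) : ℂ)
        = ∏ i, ((x:ℂ) - (hA.eigenvalues i : ℂ)) := by push_cast; rfl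
      _ = ((x : ℂ) • (1 : Matrix (Fin 2 × Fin 2) (Fin 2 × Fin 2) ℂ) - ptB (Rm t)).det :=
          (det_eig hA x).symm
      _ = ((x : ℂ) - 1/2)^2 * ((x : ℂ) - ((Real.sin t * Real.cos t : ℝ) : ℂ))
          * ((x : ℂ) + ((Real.sin t * Real.cos t : ℝ) : ℂ)) := hdet4 t x
      _ = ((((({1/2, 1/2, Real.sin t * Real.cos t, -(Real.sin t * Real.cos t)} :
            Multiset ℝ)).map fun a => x - a)).prod : ℝ) := by
          simp only [Multiset.insert_eq_cons, Multiset.map_cons, Multiset.map_singleton,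
            Multiset.prod_cons, Multiset.prod_singleton]
          push_cast
          ring
  rw [Finset.sum_eq_multiset_sum]
  have : Multiset.map (fun i => max 0 (- hA.eigenvalues i)) Finset.univ.val
      = Multiset.map (fun a => max 0 (-a)) (Multiset.map hA.eigenvalues Finset.univ.val) := by
    rw [Multiset.map_map]
    rfl
  rw [this, hms]
  simp only [Multiset.insert_eq_cons, Multiset.map_cons, Multiset.map_singleton,
    Multiset.sum_cons, Multiset.sum_singleton, neg_neg]
  rw [max_eq_left (by norm_num : -(1/2 : ℝ) ≤ 0),
    max_eq_left (by linarith : -(Real.sin t * Real.cos t) ≤ 0), max_eq_right h0]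
  ring

/-- entangled mediator achieving the direct-interaction speed:
the negativity of the reduced state equals `sin t · cos t`, reaching the maximal
value `1/2` at `t = π/4 = arccos(1/√2)`. -/
theorem entangled_mediator_speed :
    (∀ t ∈ Set.Icc (0 : ℝ) (Real.pi / 4),
      negativity (ρABent t) = Real.sin t * Real.cos t) ∧
    negativity (ρABent (Real.pi / 4)) = 1 / 2 ∧
    Real.arccos (Real.sqrt 2)⁻¹ = Real.pi / 4 := by
  have hmain : ∀ t ∈ Set.Icc (0 : ℝ) (Real.pi / 4),
      negativity (ρABent t) = Real.sin t * Real.cos t := by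
    rintro t ⟨ht0, ht1⟩
    have hs : 0 ≤ Real.sin t :=
      Real.sin_nonneg_of_nonneg_of_le_pi ht0 (by linarith [Real.pi_pos])
    have hcos : 0 ≤ Real.cos t :=
      Real.cos_nonneg_of_mem_Icc ⟨by linarith [Real.pi_pos], by linarith [Real.pi_pos]⟩
    rw [hρAB t]
    exact negativity_Rm t (mul_nonneg hs hcos)
  refine ⟨hmain, ?_, ?_⟩
  · have hp : Real.pi/4 ∈ Set.Icc (0:ℝ) (Real.pi/4) :=
      ⟨le_of_lt (by positivity), le_refl _⟩
    rw [hmain _ hp, Real.sin_pi_div_four, Real.cos_pi_div_four]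
    nlinarith [s2]
  · have h1 : (Real.sqrt 2)⁻¹ = Real.cos (Real.pi/4) := by
      rw [Real.cos_pi_div_four, inv_eq_one_div,
        div_eq_div_iff (ne_of_gt sqrt2_pos) (by norm_num : (2:ℝ) ≠ 0)]
      linarith [s2]
    rw [h1, Real.arccos_cos (le_of_lt (by positivity)) (by linarith [Real.pi_pos])]

end
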